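/- arXiv:1405.7527 — 6 statements merged into one kernel-verified Lean document; each statement's English description precedes it below -/
import Mathlib

section
/- Let P, Q ∈ 1 + T·L[T] be polynomials over a field L. Then there exist polynomials a(T₁, T₂), b(T₁, T₂) ∈ L[T₁, T₂] such that a(T₁, T₂)·P(T₁) + b(T₁, T₂)·Q(T₂) = (P ⋆ Q)(T₁·T₂), where P ⋆ Q is the convolution polynomial whose inverse-roots are the products of inverse-roots of P and Q. -/
open Polynomial

section Aux

variable {K : Type*} [CommRing K]

/-- inner induction: product over b ∈ B of (1 - C(a b) X0 X1) mod (1 - C a X0) -/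
lemma star_inner (a : K) (B : Multiset K) :
    ∃ c : MvPolynomial (Fin 2) K,
      ((B.map fun b => 1 - MvPolynomial.C (a * b) *
          (MvPolynomial.X 0 * MvPolynomial.X 1)).prod)
        = c * (1 - MvPolynomial.C a * MvPolynomial.X 0)
          + (MvPolynomial.C a * MvPolynomial.X 0) ^ (Multiset.card B) *
            ((B.map fun b => 1 - MvPolynomial.C b * MvPolynomial.X 1).prod) := by
  induction B using Multiset.induction_on with
  | empty => exact ⟨0, by simp⟩
  | cons b B ih =>
    obtain ⟨c, hc⟩ := ih
    refine ⟨(1 - MvPolynomial.C (a * b) * (MvPolynomial.X 0 * MvPolynomial.X 1)) * c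
      + (MvPolynomial.C a * MvPolynomial.X 0) ^ (Multiset.card B) *
        ((B.map fun b => 1 - MvPolynomial.C b * MvPolynomial.X 1).prod), ?_⟩
    simp only [Multiset.map_cons, Multiset.prod_cons, Multiset.card_cons]
    rw [hc, map_mul]
    ring

lemma star_outer (A B : Multiset K) :
    ∃ c d : MvPolynomial (Fin 2) K,
      (((A ×ˢ B).map fun p => 1 - MvPolynomial.C (p.1 * p.2) *
          (MvPolynomial.X 0 * MvPolynomial.X 1)).prod)
        = c * (A.map fun a => 1 - MvPolynomial.C a * MvPolynomial.X 0).prod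
          + d * (B.map fun b => 1 - MvPolynomial.C b * MvPolynomial.X 1).prod := by
  induction A using Multiset.induction_on with
  | empty => exact ⟨1, 0, by simp⟩
  | cons a A ih =>
    obtain ⟨c, d, hcd⟩ := ih
    obtain ⟨e, he⟩ := star_inner a B
    refine ⟨e * c, e * d * (1 - MvPolynomial.C a * MvPolynomial.X 0)
      + (MvPolynomial.C a * MvPolynomial.X 0) ^ (Multiset.card B) *
      (c * (A.map fun a => 1 - MvPolynomial.C a * MvPolynomial.X 0).prod
        + d * (B.map fun b => 1 - MvPolynomial.C b * MvPolynomial.X 1).prod), ?_⟩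
    rw [Multiset.cons_product, Multiset.map_add, Multiset.prod_add, Multiset.map_map]
    simp only [Function.comp, Multiset.map_cons, Multiset.prod_cons]
    rw [he, hcd]
    ring

end Aux

section Proj

variable {L K : Type*} [Field L] [Field K] [Algebra L K]

noncomputable def starProj (π : K →ₗ[L] L) (f : MvPolynomial (Fin 2) K) :
    MvPolynomial (Fin 2) L :=
  ∑ m ∈ f.support, MvPolynomial.monomial m (π (f.coeff m))

lemma coeff_starProj (π : K →ₗ[L] L) (f : MvPolynomial (Fin 2) K) (m : Fin 2 →₀ ℕ) :
    (starProj π f).coeff m = π (f.coeff m) := by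
  classical
  rw [starProj, MvPolynomial.coeff_sum]
  simp only [MvPolynomial.coeff_monomial]
  rw [Finset.sum_ite_eq' f.support m fun m => π (f.coeff m)]
  split_ifs with h
  · rfl
  · rw [MvPolynomial.notMem_support_iff.mp h, map_zero]

lemma starProj_mul (π : K →ₗ[L] L) (g : MvPolynomial (Fin 2) L)
    (v : MvPolynomial (Fin 2) K) :
    starProj π (MvPolynomial.map (algebraMap L K) g * v) = g * starProj π v := by
  ext m
  rw [coeff_starProj, MvPolynomial.coeff_mul, MvPolynomial.coeff_mul, map_sum]
  refine Finset.sum_congr rfl fun x _ => ?_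
  rw [MvPolynomial.coeff_map, coeff_starProj, ← Algebra.smul_def, map_smul, smul_eq_mul]

lemma starProj_add (π : K →ₗ[L] L) (u v : MvPolynomial (Fin 2) K) :
    starProj π (u + v) = starProj π u + starProj π v := by
  ext m
  simp [coeff_starProj, MvPolynomial.coeff_add]

lemma starProj_map (π : K →ₗ[L] L) (hπ : ∀ c : L, π (algebraMap L K c) = c)
    (g : MvPolynomial (Fin 2) L) :
    starProj π (MvPolynomial.map (algebraMap L K) g) = g := by
  ext m
  rw [coeff_starProj, MvPolynomial.coeff_map, hπ]

lemma star_map_aeval (g : MvPolynomial (Fin 2) L) (p : L[X]) :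
    MvPolynomial.map (algebraMap L K) (Polynomial.aeval g p)
      = Polynomial.aeval (MvPolynomial.map (algebraMap L K) g)
          (p.map (algebraMap L K)) := by
  rw [Polynomial.aeval_def, Polynomial.aeval_def, Polynomial.eval₂_map,
    Polynomial.hom_eval₂]
  congr 1
  ext c
  simp [MvPolynomial.algebraMap_eq]

end Proj

/-- for `P, Q ∈ 1 + T·L[T]` with convolution `P ⋆ Q` (here `S`,
characterized by its factorization over the algebraic closure), there are
polynomials `a(T₁,T₂), b(T₁,T₂) ∈ L[T₁,T₂]` with
`a(T₁,T₂)P(T₁) + b(T₁,T₂)Q(T₂) = (P ⋆ Q)(T₁T₂)`. -/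
theorem star_ideal_membership (L : Type*) [Field L] [CharZero L]
    (P Q S : L[X]) (hP : P.coeff 0 = 1) (hQ : Q.coeff 0 = 1) (hS : S.coeff 0 = 1)
    (A B : Multiset (AlgebraicClosure L))
    (hA : P.map (algebraMap L (AlgebraicClosure L)) =
      (A.map fun a => 1 - C a * X).prod)
    (hB : Q.map (algebraMap L (AlgebraicClosure L)) =
      (B.map fun b => 1 - C b * X).prod)
    (hSmap : S.map (algebraMap L (AlgebraicClosure L)) =
      ((A ×ˢ B).map fun p => 1 - C (p.1 * p.2) * X).prod) :
    ∃ a b : MvPolynomial (Fin 2) L,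
      a * Polynomial.aeval (MvPolynomial.X 0) P
        + b * Polynomial.aeval (MvPolynomial.X 1) Q
        = Polynomial.aeval (MvPolynomial.X 0 * MvPolynomial.X 1) S := by
  classical
  -- a left inverse of the algebra map, L-linearly
  obtain ⟨π, hπ0⟩ := (Algebra.linearMap L (AlgebraicClosure L)).exists_leftInverse_of_injective
    (LinearMap.ker_eq_bot.mpr (algebraMap L (AlgebraicClosure L)).injective)
  have hπ : ∀ c : L, π (algebraMap L (AlgebraicClosure L) c) = c := fun c => LinearMap.congr_fun hπ0 c
  -- the factorizations, evaluated in MvPolynomial (Fin 2) (AlgebraicClosure L)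
  have hPK : Polynomial.aeval (MvPolynomial.X 0 : MvPolynomial (Fin 2) (AlgebraicClosure L))
      (P.map (algebraMap L (AlgebraicClosure L)))
      = (A.map fun a => 1 - MvPolynomial.C a * MvPolynomial.X 0).prod := by
    rw [hA, map_multiset_prod, Multiset.map_map]
    refine congrArg Multiset.prod (Multiset.map_congr rfl fun a _ => ?_)
    simp [MvPolynomial.algebraMap_eq]
  have hQK : Polynomial.aeval (MvPolynomial.X 1 : MvPolynomial (Fin 2) (AlgebraicClosure L))
      (Q.map (algebraMap L (AlgebraicClosure L)))
      = (B.map fun b => 1 - MvPolynomial.C b * MvPolynomial.X 1).prod := by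
    rw [hB, map_multiset_prod, Multiset.map_map]
    refine congrArg Multiset.prod (Multiset.map_congr rfl fun b _ => ?_)
    simp [MvPolynomial.algebraMap_eq]
  have hSK : Polynomial.aeval
      (MvPolynomial.X 0 * MvPolynomial.X 1 : MvPolynomial (Fin 2) (AlgebraicClosure L))
      (S.map (algebraMap L (AlgebraicClosure L)))
      = ((A ×ˢ B).map fun p => 1 - MvPolynomial.C (p.1 * p.2) *
          (MvPolynomial.X 0 * MvPolynomial.X 1)).prod := by
    rw [hSmap, map_multiset_prod, Multiset.map_map]
    refine congrArg Multiset.prod (Multiset.map_congr rfl fun p _ => ?_)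
    simp [MvPolynomial.algebraMap_eq]
  obtain ⟨c, d, hcd⟩ := star_outer A B
  -- key identity over (AlgebraicClosure L)
  have key : MvPolynomial.map (algebraMap L (AlgebraicClosure L))
        (Polynomial.aeval (MvPolynomial.X 0 * MvPolynomial.X 1) S)
      = MvPolynomial.map (algebraMap L (AlgebraicClosure L))
          (Polynomial.aeval (MvPolynomial.X 0) P) * c
        + MvPolynomial.map (algebraMap L (AlgebraicClosure L))
            (Polynomial.aeval (MvPolynomial.X 1) Q) * d := by
    rw [star_map_aeval, star_map_aeval, star_map_aeval]
    simp only [map_mul, MvPolynomial.map_X]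
    rw [hPK, hQK, hSK, hcd]
    ring
  refine ⟨starProj π c, starProj π d, ?_⟩
  have := congrArg (starProj π) key
  rw [starProj_map π hπ, starProj_add, starProj_mul, starProj_mul] at this
  rw [this]
  ring
end

section
/- Let D be a finite-dimensional K-vector space D_st with a linear operator Φ, N = 0, together with a K-vector space D_K containing D_st via an isomorphism ι : D_st → D_K, and a subspace Fil⁰ D_K ⊆ D_K. Form the complex C: (D_st ⊕ Fil⁰ D_K) → (D_st ⊕ D_st ⊕ D_K) → D_st with d⁰(u,v) = (P(Φ)u, Nu, ι(u) - v) and d¹(w,x,y) = Nw - P(qΦ)x. If P(Φ) and P(qΦ) are bijective on D_st, then the map D_K → H¹(C) induced by y ↦ [(0, 0, y)] is surjective with kernel Fil⁰ D_K, giving an isomorphism D_K / Fil⁰ D_K ≅ H¹(C). -/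
open Polynomial

/-- for a convenient module (`N = 0`, `P(Φ)` and `P(qΦ)` bijective),
the map `D_K → H¹(C)`, `y ↦ [(0,0,y)]`, is surjective with kernel `Fil⁰ D_K`,
giving an isomorphism `D_K / Fil⁰ D_K ≅ H¹(C)`. -/
theorem convenient_H1_iso (K Dst DK : Type*) [Field K]
    [AddCommGroup Dst] [Module K Dst] [FiniteDimensional K Dst]
    [AddCommGroup DK] [Module K DK]
    (q : K) (hq : q ≠ 0)
    (Φ : Module.End K Dst) (hΦ : Function.Bijective Φ)
    (ι : Dst ≃ₗ[K] DK) (Fil : Submodule K DK)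
    (P : K[X]) (hP0 : P.coeff 0 = 1)
    (hPΦ : Function.Bijective (Polynomial.aeval Φ P))
    (hPqΦ : Function.Bijective (Polynomial.aeval (q • Φ) P))
    (d0 : (Dst × Fil) →ₗ[K] (Dst × Dst × DK))
    (hd0 : ∀ (u : Dst) (v : Fil),
      d0 (u, v) = (Polynomial.aeval Φ P u, 0, ι u - (v : DK)))
    (d1 : (Dst × Dst × DK) →ₗ[K] Dst)
    (hd1 : ∀ (w x : Dst) (y : DK), d1 (w, x, y) = -(Polynomial.aeval (q • Φ) P x))
    (j : DK →ₗ[K]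
      (LinearMap.ker d1 ⧸ (LinearMap.range d0).comap (LinearMap.ker d1).subtype))
    (hj : ∀ (y : DK) (h : ((0 : Dst), (0 : Dst), y) ∈ LinearMap.ker d1),
      j y = Submodule.Quotient.mk ⟨((0 : Dst), (0 : Dst), y), h⟩) :
    Function.Surjective j ∧ LinearMap.ker j = Fil := by
  set A := Polynomial.aeval Φ P with hA
  set B := Polynomial.aeval (q • Φ) P with hB
  have hker0 : ∀ y : DK, ((0 : Dst), (0 : Dst), y) ∈ LinearMap.ker d1 := by
    intro y
    simp [LinearMap.mem_ker, hd1]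
  constructor
  · intro z
    obtain ⟨z, rfl⟩ := Submodule.Quotient.mk_surjective _ z
    · obtain ⟨⟨w, x, y⟩, hz⟩ := z
      have hx : x = 0 := by
        have h1 : d1 (w, x, y) = 0 := hz
        rw [hd1] at h1
        have : B x = B 0 := by simpa using h1
        exact hPqΦ.injective this
      obtain ⟨u, hu⟩ := hPΦ.surjective w
      refine ⟨y - ι u, ?_⟩
      rw [hj _ (hker0 _)]
      rw [Submodule.Quotient.eq]
      refine Submodule.mem_comap.mpr ⟨(-u, 0), ?_⟩
      rw [hd0]
      subst hx
      simp [Prod.ext_iff, ← hu]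
  · ext y
    rw [LinearMap.mem_ker, hj _ (hker0 y), Submodule.Quotient.mk_eq_zero]
    rw [Submodule.mem_comap]
    constructor
    · rintro ⟨⟨u, v⟩, huv⟩
      rw [hd0] at huv
      have h1 : A u = 0 := congrArg Prod.fst huv
      have hu0 : u = 0 := hPΦ.injective (by simpa using h1)
      have h2 : ι u - (v : DK) = y := congrArg (Prod.snd ∘ Prod.snd) huv
      rw [hu0] at h2
      simp at h2
      rw [← h2]
      exact neg_mem v.2
    · intro hy
      refine ⟨(0, ⟨-y, neg_mem hy⟩), ?_⟩
      rw [hd0]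
      simp
end

section
/- In the setting of the previous complex (N = 0, P(Φ) and P(qΦ) bijective), the inverse of the isomorphism D_K/Fil⁰ ≅ H¹(C) is given explicitly by [(w, x, y)] ↦ y - ι(P(Φ)⁻¹ w) mod Fil⁰ D_K; that is, for every cocycle (w, x, y) ∈ ker(d¹), the classes of (w,x,y) and (0, 0, y - ι(P(Φ)⁻¹w)) in H¹(C) are equal. -/
open Polynomial

/-- in the convenient situation, the inverse of
`D_K/Fil⁰ ≅ H¹(C)` is `[(w,x,y)] ↦ y - ι(P(Φ)⁻¹w) mod Fil⁰`: for every cocycle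
`(w,x,y)` the classes of `(w,x,y)` and `(0,0, y - ι(P(Φ)⁻¹w))` agree in `H¹(C)`,
i.e. their difference lies in the image of `d⁰`. -/
theorem convenient_H1_iso_inverse (K Dst DK : Type*) [Field K]
    [AddCommGroup Dst] [Module K Dst] [FiniteDimensional K Dst]
    [AddCommGroup DK] [Module K DK]
    (q : K) (hq : q ≠ 0)
    (Φ : Module.End K Dst) (hΦ : Function.Bijective Φ)
    (ι : Dst ≃ₗ[K] DK) (Fil : Submodule K DK)
    (P : K[X]) (hP0 : P.coeff 0 = 1)
    (hPΦ : Function.Bijective (Polynomial.aeval Φ P))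
    (hPqΦ : Function.Bijective (Polynomial.aeval (q • Φ) P))
    (d0 : (Dst × Fil) →ₗ[K] (Dst × Dst × DK))
    (hd0 : ∀ (u : Dst) (v : Fil),
      d0 (u, v) = (Polynomial.aeval Φ P u, 0, ι u - (v : DK)))
    (d1 : (Dst × Dst × DK) →ₗ[K] Dst)
    (hd1 : ∀ (w x : Dst) (y : DK), d1 (w, x, y) = -(Polynomial.aeval (q • Φ) P x)) :
    ∀ (w x : Dst) (y : DK), d1 (w, x, y) = 0 →
      ∀ w' : Dst, Polynomial.aeval Φ P w' = w →
        ((w, x, y) - ((0 : Dst), (0 : Dst), y - ι w')) ∈ LinearMap.range d0 := by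
  intro w x y hcoc w' hw'
  have hx : x = 0 := by
    have h1 := hd1 w x y
    rw [hcoc] at h1
    have : Polynomial.aeval (q • Φ) P x = 0 := by
      have := h1.symm
      simpa [neg_eq_zero] using this
    have h0 : Polynomial.aeval (q • Φ) P (0 : Dst) = 0 := map_zero _
    exact hPqΦ.injective (this.trans h0.symm)
  refine ⟨(w', (0 : Fil)), ?_⟩
  rw [hd0]
  subst hx
  simp [hw', Prod.ext_iff, sub_sub_cancel]
end

section
/- Let D_st = K be the one-dimensional module with Φ acting as multiplication by q⁻¹ (the module Q_p(1): φ = p⁻¹ twisted), N = 0, D_K = K, Fil⁰ D_K = 0. If P(1) ≠ 0 and P(q⁻¹) ≠ 0, then H¹ of the complex C_{st,K,P}(Q_p(1)) — i.e. of K ⊕ 0 → K ⊕ K ⊕ K → K with d⁰(u) = (P(q⁻¹)u, 0, u) and d¹(w,x,y) = -P(q⁻¹·q)x = -P(1)x — is isomorphic to K. -/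
open Polynomial

/-- for the module `Q_p(1)` (`D_st = K` with `Φ = q⁻¹`, `N = 0`,
`D_K = K`, `Fil⁰ = 0`), if `P(1) ≠ 0` and `P(q⁻¹) ≠ 0` then `H¹` of the complex
`K → K ⊕ K ⊕ K → K`, `d⁰(u) = (P(q⁻¹)u, 0, u)`, `d¹(w,x,y) = -P(1)x`,
is isomorphic to `K`. -/
theorem H1_Qp_one_iso (K : Type*) [Field K]
    (q : K) (hq : q ≠ 0)
    (P : K[X]) (hP0 : P.coeff 0 = 1)
    (hP1 : P.eval 1 ≠ 0) (hPq : P.eval q⁻¹ ≠ 0)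
    (d0 : K →ₗ[K] (K × K × K))
    (hd0 : ∀ u : K, d0 u = (P.eval q⁻¹ * u, 0, u))
    (d1 : (K × K × K) →ₗ[K] K)
    (hd1 : ∀ w x y : K, d1 (w, x, y) = -(P.eval 1 * x)) :
    Nonempty
      ((LinearMap.ker d1 ⧸ (LinearMap.range d0).comap (LinearMap.ker d1).subtype)
        ≃ₗ[K] K) := by
  -- the map (w,x,y) ↦ w - P(q⁻¹) y
  let f : (K × K × K) →ₗ[K] K :=
    { toFun := fun v => v.1 - P.eval q⁻¹ * v.2.2
      map_add' := by intro a b; simp; ring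
      map_smul' := by intro c a; simp; ring }
  let g : (LinearMap.ker d1) →ₗ[K] K := f.comp (LinearMap.ker d1).subtype
  have hsurj : Function.Surjective g := by
    intro c
    have hmem : ((c, 0, 0) : K × K × K) ∈ LinearMap.ker d1 := by
      simp [LinearMap.mem_ker, hd1]
    exact ⟨⟨(c, 0, 0), hmem⟩, by simp [g, f]⟩
  have hker : LinearMap.ker g = (LinearMap.range d0).comap (LinearMap.ker d1).subtype := by
    ext ⟨⟨w, x, y⟩, hv⟩
    have hx : d1 (w, x, y) = -(P.eval 1 * x) := hd1 w x y
    have hv' : -(P.eval 1 * x) = 0 := by rw [← hx]; exact hv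
    have hx0 : x = 0 := by
      rcases mul_eq_zero.mp (neg_eq_zero.mp hv') with h | h
      · exact absurd h hP1
      · exact h
    constructor
    · intro h
      have : w - P.eval q⁻¹ * y = 0 := h
      refine ⟨y, ?_⟩
      have hw : P.eval q⁻¹ * y = w := (sub_eq_zero.mp this).symm
      rw [hd0]
      simp only [Submodule.coe_subtype]
      simp [hw, hx0]
    · rintro ⟨u, hu⟩
      rw [hd0] at hu
      simp only [Submodule.coe_subtype] at hu
      have h1 : P.eval q⁻¹ * u = w := congrArg Prod.fst hu
      have h3 : u = y := congrArg (fun p => p.2.2) hu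
      show w - P.eval q⁻¹ * y = 0
      rw [← h1, h3]; ring
  exact ⟨hker ▸ g.quotKerEquivOfSurjective hsurj⟩
end

section
/- Cup product on the 3-term complexes: Given finite-dimensional modules D₁, D₂ with operators Φ₁, Φ₂, N₁, N₂ (N_iΦ_i = qΦ_iN_i), polynomials P₁, P₂ ∈ 1+T·K[T], polynomials a, b with a(T₁,T₂)P₁(T₁) + b(T₁,T₂)P₂(T₂) = (P₁⋆P₂)(T₁T₂), and λ ∈ K, the bilinear maps given by the table in the paper — e.g. in degrees (0,0): (u,v)·(u',v') = (u⊗u', v⊗v'); in degrees (0,1): (u,v)·(w',x',y') = (b(Φ₁,Φ₂)(u⊗w'), u⊗x', (λu + (1-λ)v)⊗y'); etc. — define a map of complexes C_{st,P₁}(D₁) ⊗ C_{st,P₂}(D₂) → C_{st,P₁⋆P₂}(D₁⊗D₂), i.e. satisfy the Leibniz rule d(α·β) = dα·β + (-1)^{deg α} α·dβ. -/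
open Polynomial TensorProduct

/-- Evaluation of a two-variable polynomial at two commuting endomorphisms:
`p(F, G) = ∑ c_{ij} Fⁱ ∘ Gʲ`. -/
noncomputable def evalEnd2 {K M : Type*} [CommSemiring K] [AddCommGroup M]
    [Module K M] (p : MvPolynomial (Fin 2) K) (F G : Module.End K M) :
    Module.End K M :=
  ∑ m ∈ p.support, MvPolynomial.coeff m p • (F ^ (m 0) * G ^ (m 1))

section Helpers

variable {K M : Type*} [CommSemiring K] [AddCommGroup M] [Module K M]

lemma exists_evalEnd2_algHom (A B : Module.End K M) (hAB : A * B = B * A) :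
    ∃ ev : MvPolynomial (Fin 2) K →ₐ[K] Module.End K M,
      ev (MvPolynomial.X 0) = A ∧ ev (MvPolynomial.X 1) = B ∧
      ∀ p, ev p = evalEnd2 p A B := by
  have hcomm : ∀ x ∈ ({A, B} : Set (Module.End K M)), ∀ y ∈ ({A, B} : Set (Module.End K M)),
      x * y = y * x := by
    rintro x (rfl | rfl) y (rfl | rfl) <;> simp [hAB]
  letI : CommSemiring (Algebra.adjoin K ({A, B} : Set (Module.End K M))) :=
    Algebra.adjoinCommSemiringOfComm K hcomm
  have hA : A ∈ Algebra.adjoin K ({A, B} : Set (Module.End K M)) :=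
    Algebra.subset_adjoin (by simp)
  have hB : B ∈ Algebra.adjoin K ({A, B} : Set (Module.End K M)) :=
    Algebra.subset_adjoin (by simp)
  let v : Fin 2 → (Algebra.adjoin K ({A, B} : Set (Module.End K M))) := ![⟨A, hA⟩, ⟨B, hB⟩]
  let ev0 : MvPolynomial (Fin 2) K →ₐ[K] (Algebra.adjoin K ({A, B} : Set (Module.End K M))) :=
    MvPolynomial.aeval v
  refine ⟨((Algebra.adjoin K ({A, B} : Set (Module.End K M))).val).comp ev0,
    by simp [ev0, v], by simp [ev0, v], ?_⟩
  intro p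
  show (Algebra.adjoin K ({A, B} : Set (Module.End K M))).val (MvPolynomial.aeval v p)
      = evalEnd2 p A B
  rw [MvPolynomial.aeval_def, MvPolynomial.eval₂_eq', map_sum]
  unfold evalEnd2
  refine Finset.sum_congr rfl fun d _ => ?_
  simp [Fin.prod_univ_two, Algebra.smul_def, v]

lemma comm_pow (Mo A : Module.End K M) (c : K) (h : Mo * A = c • (A * Mo)) (n : ℕ) :
    Mo * A ^ n = c ^ n • (A ^ n * Mo) := by
  induction n with
  | zero => simp
  | succ n ih =>
      rw [pow_succ, ← mul_assoc, ih, smul_mul_assoc, mul_assoc, h, mul_smul_comm, smul_smul,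
        ← mul_assoc, ← pow_succ, ← pow_succ]

lemma mul_evalEnd2 (Mo A B : Module.End K M) (c d : K)
    (hA : Mo * A = c • (A * Mo)) (hB : Mo * B = d • (B * Mo)) (p : MvPolynomial (Fin 2) K) :
    Mo * evalEnd2 p A B = evalEnd2 p (c • A) (d • B) * Mo := by
  unfold evalEnd2
  rw [Finset.mul_sum, Finset.sum_mul]
  refine Finset.sum_congr rfl fun m _ => ?_
  have key : Mo * (A ^ (m 0) * B ^ (m 1)) = (c ^ (m 0) * d ^ (m 1)) • (A ^ (m 0) * B ^ (m 1) * Mo) := by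
    rw [← mul_assoc, comm_pow Mo A c hA, smul_mul_assoc, mul_assoc, comm_pow Mo B d hB,
      mul_smul_comm, smul_smul, mul_assoc]
  rw [mul_smul_comm, key]
  simp only [_root_.smul_pow, smul_mul_assoc, mul_smul_comm, smul_smul, mul_assoc]
  match_scalars
  all_goals ring

variable {D1 D2 : Type*} [AddCommGroup D1] [Module K D1] [AddCommGroup D2] [Module K D2]

lemma map_id_pow_left (f : Module.End K D1) (n : ℕ) :
    (TensorProduct.map f (LinearMap.id : D2 →ₗ[K] D2)) ^ n
      = TensorProduct.map (f ^ n) LinearMap.id := by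
  induction n with
  | zero => simp [Module.End.one_eq_id, TensorProduct.map_id]
  | succ n ih =>
      rw [pow_succ, ih, Module.End.mul_eq_comp, ← TensorProduct.map_comp, LinearMap.id_comp,
        ← Module.End.mul_eq_comp, ← pow_succ]

lemma map_id_pow_right (f : Module.End K D2) (n : ℕ) :
    (TensorProduct.map (LinearMap.id : D1 →ₗ[K] D1) f) ^ n
      = TensorProduct.map LinearMap.id (f ^ n) := by
  induction n with
  | zero => simp [Module.End.one_eq_id, TensorProduct.map_id]
  | succ n ih =>
      rw [pow_succ, ih, Module.End.mul_eq_comp, ← TensorProduct.map_comp, LinearMap.id_comp,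
        ← Module.End.mul_eq_comp, ← pow_succ]

lemma aeval_map_left (f : Module.End K D1) (p : K[X]) :
    Polynomial.aeval (TensorProduct.map f (LinearMap.id : D2 →ₗ[K] D2)) p
      = TensorProduct.map (Polynomial.aeval f p) LinearMap.id := by
  induction p using Polynomial.induction_on' with
  | add p q hp hq => rw [map_add, map_add, hp, hq, TensorProduct.map_add_left]
  | monomial n c =>
      rw [Polynomial.aeval_monomial, Polynomial.aeval_monomial, map_id_pow_left,
        ← Algebra.smul_def, ← Algebra.smul_def, TensorProduct.map_smul_left]

lemma aeval_map_right (f : Module.End K D2) (p : K[X]) :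
    Polynomial.aeval (TensorProduct.map (LinearMap.id : D1 →ₗ[K] D1) f) p
      = TensorProduct.map LinearMap.id (Polynomial.aeval f p) := by
  induction p using Polynomial.induction_on' with
  | add p q hp hq => rw [map_add, map_add, hp, hq, TensorProduct.map_add_right]
  | monomial n c =>
      rw [Polynomial.aeval_monomial, Polynomial.aeval_monomial, map_id_pow_right,
        ← Algebra.smul_def, ← Algebra.smul_def, TensorProduct.map_smul_right]

end Helpers

/-- the explicit cup-product formulas of the paper define a map
of complexes `C_{st,P₁}(D₁) ⊗ C_{st,P₂}(D₂) → C_{st,P₁⋆P₂}(D₁⊗D₂)`, i.e. the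
Leibniz rule `d(α·β) = dα·β + (-1)^{deg α} α·dβ` holds; on pure tensors this
amounts to the three identities below (in bidegrees `(0,0)`, `(0,1)` and
`(1,0)`; in all higher bidegrees both sides vanish). -/
theorem cup_product_chain_map
    (K : Type*) [Field K] [CharZero K] (q : K) (hq : q ≠ 0)
    (D1 D2 D1K D2K : Type*)
    [AddCommGroup D1] [Module K D1] [FiniteDimensional K D1]
    [AddCommGroup D2] [Module K D2] [FiniteDimensional K D2]
    [AddCommGroup D1K] [Module K D1K] [AddCommGroup D2K] [Module K D2K]
    (Φ1 N1 : Module.End K D1) (hΦ1 : Function.Bijective Φ1)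
    (hN1 : N1 * Φ1 = q • (Φ1 * N1))
    (ι1 : D1 ≃ₗ[K] D1K) (Fil1 : Submodule K D1K)
    (Φ2 N2 : Module.End K D2) (hΦ2 : Function.Bijective Φ2)
    (hN2 : N2 * Φ2 = q • (Φ2 * N2))
    (ι2 : D2 ≃ₗ[K] D2K) (Fil2 : Submodule K D2K)
    (P1 P2 R : K[X])
    (hP10 : P1.coeff 0 = 1) (hP20 : P2.coeff 0 = 1) (hR0 : R.coeff 0 = 1)
    -- `R = P₁ ⋆ P₂` together with the Bézout-type data `a, b`:
    (a b : MvPolynomial (Fin 2) K)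
    (hab : a * Polynomial.aeval (MvPolynomial.X 0) P1
        + b * Polynomial.aeval (MvPolynomial.X 1) P2
        = Polynomial.aeval (MvPolynomial.X 0 * MvPolynomial.X 1) R)
    (lam : K)
    -- the operators `Φ₁ ⊗ 1`, `1 ⊗ Φ₂`, `Φ = Φ₁ ⊗ Φ₂` and `N = N₁⊗1 + 1⊗N₂`
    -- on the tensor product:
    (E1 E2 ΦT NT : Module.End K (D1 ⊗[K] D2))
    (hE1 : E1 = TensorProduct.map Φ1 (LinearMap.id : D2 →ₗ[K] D2))
    (hE2 : E2 = TensorProduct.map (LinearMap.id : D1 →ₗ[K] D1) Φ2)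
    (hΦT : ΦT = TensorProduct.map Φ1 Φ2)
    (hNT : NT = TensorProduct.map N1 (LinearMap.id : D2 →ₗ[K] D2)
        + TensorProduct.map (LinearMap.id : D1 →ₗ[K] D1) N2) :
    -- Leibniz in bidegree (0,0):
    (∀ (u : D1) (u' : D2) (v : Fil1) (v' : Fil2),
      Polynomial.aeval ΦT R (u ⊗ₜ[K] u')
          = evalEnd2 a E1 E2 ((Polynomial.aeval Φ1 P1 u) ⊗ₜ[K] u')
            + evalEnd2 b E1 E2 (u ⊗ₜ[K] (Polynomial.aeval Φ2 P2 u'))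
        ∧ NT (u ⊗ₜ[K] u') = (N1 u) ⊗ₜ[K] u' + u ⊗ₜ[K] (N2 u')
        ∧ TensorProduct.congr ι1 ι2 (u ⊗ₜ[K] u') - (v : D1K) ⊗ₜ[K] (v' : D2K)
          = (ι1 u - (v : D1K)) ⊗ₜ[K] ((1 - lam) • ι2 u' + lam • (v' : D2K))
            + (lam • ι1 u + (1 - lam) • (v : D1K)) ⊗ₜ[K] (ι2 u' - (v' : D2K))) ∧
    -- Leibniz in bidegree (0,1):
    (∀ (u : D1) (v : Fil1) (w' x' : D2) (y' : D2K),
      NT (evalEnd2 b E1 E2 (u ⊗ₜ[K] w'))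
          - Polynomial.aeval (q • ΦT) R (u ⊗ₜ[K] x')
        = -(evalEnd2 a E1 (q • E2) ((Polynomial.aeval Φ1 P1 u) ⊗ₜ[K] x'))
          + evalEnd2 b (q • E1) E2 ((N1 u) ⊗ₜ[K] w')
          + evalEnd2 b E1 (q • E2)
              (u ⊗ₜ[K] (N2 w' - Polynomial.aeval (q • Φ2) P2 x'))) ∧
    -- Leibniz in bidegree (1,0):
    (∀ (w x : D1) (y : D1K) (u' : D2) (v' : Fil2),
      NT (evalEnd2 a E1 E2 (w ⊗ₜ[K] u'))
          - Polynomial.aeval (q • ΦT) R (x ⊗ₜ[K] u')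
        = evalEnd2 a (q • E1) E2
              ((N1 w - Polynomial.aeval (q • Φ1) P1 x) ⊗ₜ[K] u')
          - (-(evalEnd2 a E1 (q • E2) (w ⊗ₜ[K] (N2 u')))
              + evalEnd2 b (q • E1) E2 (x ⊗ₜ[K] (Polynomial.aeval Φ2 P2 u')))) := by
  -- basic commutation facts
  have hAB : E1 * E2 = E2 * E1 := by
    ext u u'
    simp [hE1, hE2]
  have hT' : ΦT = E1 * E2 := by
    ext u u'
    simp [hΦT, hE1, hE2]
  have hM1A : (TensorProduct.map N1 (LinearMap.id : D2 →ₗ[K] D2)) * E1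
      = q • (E1 * TensorProduct.map N1 (LinearMap.id : D2 →ₗ[K] D2)) := by
    ext u u'
    have h := LinearMap.congr_fun hN1 u
    simp only [Module.End.mul_apply, LinearMap.smul_apply] at h
    simp [hE1, h, TensorProduct.smul_tmul']
  have hM1B : (TensorProduct.map N1 (LinearMap.id : D2 →ₗ[K] D2)) * E2
      = E2 * TensorProduct.map N1 (LinearMap.id : D2 →ₗ[K] D2) := by
    ext u u'
    simp [hE2]
  have hM2B : (TensorProduct.map (LinearMap.id : D1 →ₗ[K] D1) N2) * E2
      = q • (E2 * TensorProduct.map (LinearMap.id : D1 →ₗ[K] D1) N2) := by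
    ext u u'
    have h := LinearMap.congr_fun hN2 u'
    simp only [Module.End.mul_apply, LinearMap.smul_apply] at h
    simp [hE2, h, TensorProduct.tmul_smul]
  have hM2A : (TensorProduct.map (LinearMap.id : D1 →ₗ[K] D1) N2) * E1
      = E1 * TensorProduct.map (LinearMap.id : D1 →ₗ[K] D1) N2 := by
    ext u u'
    simp [hE1]
  -- pointwise tensor rewrites
  have e1 : ∀ (p : K[X]) (u : D1) (y : D2),
      (Polynomial.aeval Φ1 p u) ⊗ₜ[K] y = Polynomial.aeval E1 p (u ⊗ₜ[K] y) := by
    intro p u y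
    rw [hE1, aeval_map_left]
    simp
  have e1q : ∀ (p : K[X]) (u : D1) (y : D2),
      (Polynomial.aeval (q • Φ1) p u) ⊗ₜ[K] y = Polynomial.aeval (q • E1) p (u ⊗ₜ[K] y) := by
    intro p u y
    rw [hE1, ← TensorProduct.map_smul_left, aeval_map_left]
    simp
  have e2 : ∀ (p : K[X]) (x : D1) (y : D2),
      x ⊗ₜ[K] (Polynomial.aeval Φ2 p y) = Polynomial.aeval E2 p (x ⊗ₜ[K] y) := by
    intro p x y
    rw [hE2, aeval_map_right]
    simp
  have e2q : ∀ (p : K[X]) (x : D1) (y : D2),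
      x ⊗ₜ[K] (Polynomial.aeval (q • Φ2) p y) = Polynomial.aeval (q • E2) p (x ⊗ₜ[K] y) := by
    intro p x y
    rw [hE2, ← TensorProduct.map_smul_right, aeval_map_right]
    simp
  have n1 : ∀ (u : D1) (y : D2), (N1 u) ⊗ₜ[K] y
      = TensorProduct.map N1 (LinearMap.id : D2 →ₗ[K] D2) (u ⊗ₜ[K] y) := by
    intro u y; simp
  have n2 : ∀ (u : D1) (y : D2), u ⊗ₜ[K] (N2 y)
      = TensorProduct.map (LinearMap.id : D1 →ₗ[K] D1) N2 (u ⊗ₜ[K] y) := by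
    intro u y; simp
  -- the evaluation algebra homomorphisms
  obtain ⟨ev1, ev1X0, ev1X1, ev1eq⟩ := exists_evalEnd2_algHom E1 E2 hAB
  obtain ⟨ev2, ev2X0, ev2X1, ev2eq⟩ := exists_evalEnd2_algHom E1 (q • E2)
    (by rw [mul_smul_comm, smul_mul_assoc, hAB])
  obtain ⟨ev3, ev3X0, ev3X1, ev3eq⟩ := exists_evalEnd2_algHom (q • E1) E2
    (by rw [mul_smul_comm, smul_mul_assoc, hAB])
  have key1 : Polynomial.aeval (E1 * E2) R
      = evalEnd2 a E1 E2 * Polynomial.aeval E1 P1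
        + evalEnd2 b E1 E2 * Polynomial.aeval E2 P2 := by
    have h := congrArg ev1 hab
    rw [map_add, map_mul, map_mul, ← Polynomial.aeval_algHom_apply,
      ← Polynomial.aeval_algHom_apply, ← Polynomial.aeval_algHom_apply, map_mul,
      ev1X0, ev1X1, ev1eq, ev1eq] at h
    exact h.symm
  have key2 : Polynomial.aeval (E1 * (q • E2)) R
      = evalEnd2 a E1 (q • E2) * Polynomial.aeval E1 P1
        + evalEnd2 b E1 (q • E2) * Polynomial.aeval (q • E2) P2 := by
    have h := congrArg ev2 hab
    rw [map_add, map_mul, map_mul, ← Polynomial.aeval_algHom_apply,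
      ← Polynomial.aeval_algHom_apply, ← Polynomial.aeval_algHom_apply, map_mul,
      ev2X0, ev2X1, ev2eq, ev2eq] at h
    exact h.symm
  have key3 : Polynomial.aeval ((q • E1) * E2) R
      = evalEnd2 a (q • E1) E2 * Polynomial.aeval (q • E1) P1
        + evalEnd2 b (q • E1) E2 * Polynomial.aeval E2 P2 := by
    have h := congrArg ev3 hab
    rw [map_add, map_mul, map_mul, ← Polynomial.aeval_algHom_apply,
      ← Polynomial.aeval_algHom_apply, ← Polynomial.aeval_algHom_apply, map_mul,
      ev3X0, ev3X1, ev3eq, ev3eq] at h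
    exact h.symm
  have hqT2 : q • ΦT = E1 * (q • E2) := by rw [hT', mul_smul_comm]
  have hqT3 : q • ΦT = (q • E1) * E2 := by rw [hT', smul_mul_assoc]
  -- the Leibniz operator identity for N
  have I1 : ∀ p : MvPolynomial (Fin 2) K, NT * evalEnd2 p E1 E2
      = evalEnd2 p (q • E1) E2 * TensorProduct.map N1 (LinearMap.id : D2 →ₗ[K] D2)
        + evalEnd2 p E1 (q • E2) * TensorProduct.map (LinearMap.id : D1 →ₗ[K] D1) N2 := by
    intro p
    rw [hNT, add_mul]
    congr 1
    · have h := mul_evalEnd2 (TensorProduct.map N1 (LinearMap.id : D2 →ₗ[K] D2)) E1 E2 q 1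
        hM1A (by rw [one_smul]; exact hM1B) p
      rw [one_smul] at h
      exact h
    · have h := mul_evalEnd2 (TensorProduct.map (LinearMap.id : D1 →ₗ[K] D1) N2) E1 E2 1 q
        (by rw [one_smul]; exact hM2A) hM2B p
      rw [one_smul] at h
      exact h
  refine ⟨?_, ?_, ?_⟩
  · -- bidegree (0,0)
    intro u u' v v'
    refine ⟨?_, ?_, ?_⟩
    · have L := LinearMap.congr_fun key1 (u ⊗ₜ[K] u')
      simp only [Module.End.mul_apply, LinearMap.add_apply] at L
      rw [e1 P1 u u', e2 P2 u u', hT']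
      exact L
    · rw [hNT]
      simp
    · rw [TensorProduct.congr_tmul]
      simp only [TensorProduct.tmul_sub, TensorProduct.sub_tmul, TensorProduct.tmul_add,
        TensorProduct.add_tmul, TensorProduct.tmul_smul, TensorProduct.smul_tmul', smul_sub,
        sub_smul, one_smul, smul_smul]
      module
  · -- bidegree (0,1)
    intro u v w' x' y'
    have L1 := LinearMap.congr_fun (I1 b) (u ⊗ₜ[K] w')
    simp only [Module.End.mul_apply, LinearMap.add_apply] at L1
    have L2 := LinearMap.congr_fun key2 (u ⊗ₜ[K] x')
    simp only [Module.End.mul_apply, LinearMap.add_apply] at L2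
    rw [e1 P1 u x', TensorProduct.tmul_sub, e2q P2 u x', n1 u w', n2 u w', L1, hqT2, L2]
    simp only [map_sub]
    abel
  · -- bidegree (1,0)
    intro w x y u' v'
    have L1 := LinearMap.congr_fun (I1 a) (w ⊗ₜ[K] u')
    simp only [Module.End.mul_apply, LinearMap.add_apply] at L1
    have L2 := LinearMap.congr_fun key3 (x ⊗ₜ[K] u')
    simp only [Module.End.mul_apply, LinearMap.add_apply] at L2
    rw [TensorProduct.sub_tmul, e1q P1 x u', n1 w u', n2 w u', e2 P2 x u', L1, hqT3, L2]
    simp only [map_sub]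
    abel
end

section
/- Changing λ to λ' in the cup-product formulas of the preceding statement changes the product map by a chain homotopy: there exists a degree -1 map h on the tensor complex such that (product with λ) - (product with λ') = d∘h + h∘d. -/
open Polynomial TensorProduct

/-- changing the parameter `λ` to `λ'` in the explicit
cup-product formulas changes the product map by a chain homotopy: there are
degree `-1` bilinear maps `h_{i,j}` on the tensor complex with
`(product with λ) - (product with λ') = d∘h + h∘d` in every bidegree.  (The
products differ only in the third components of the `(0,1)` and `(1,0)`
products, by `((λ-λ')·(ι₁u - v)) ⊗ y'` resp. `y ⊗ ((λ-λ')·(v' - ι₂u'))`.) -/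
theorem cup_product_lambda_homotopy
    (K : Type*) [Field K] [CharZero K] (q : K) (hq : q ≠ 0)
    (D1 D2 D1K D2K : Type*)
    [AddCommGroup D1] [Module K D1] [FiniteDimensional K D1]
    [AddCommGroup D2] [Module K D2] [FiniteDimensional K D2]
    [AddCommGroup D1K] [Module K D1K] [AddCommGroup D2K] [Module K D2K]
    (Φ1 N1 : Module.End K D1) (hN1 : N1 * Φ1 = q • (Φ1 * N1))
    (ι1 : D1 ≃ₗ[K] D1K) (Fil1 : Submodule K D1K)
    (Φ2 N2 : Module.End K D2) (hN2 : N2 * Φ2 = q • (Φ2 * N2))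
    (ι2 : D2 ≃ₗ[K] D2K) (Fil2 : Submodule K D2K)
    (P1 P2 R : K[X])
    (hP10 : P1.coeff 0 = 1) (hP20 : P2.coeff 0 = 1) (hR0 : R.coeff 0 = 1)
    (a b : MvPolynomial (Fin 2) K)
    (hab : a * Polynomial.aeval (MvPolynomial.X 0) P1
        + b * Polynomial.aeval (MvPolynomial.X 1) P2
        = Polynomial.aeval (MvPolynomial.X 0 * MvPolynomial.X 1) R)
    (lam lam' : K)
    -- tensor-product data: operators, filtration, differentials
    (E1 E2 ΦT NT : Module.End K (D1 ⊗[K] D2))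
    (hE1 : E1 = TensorProduct.map Φ1 (LinearMap.id : D2 →ₗ[K] D2))
    (hE2 : E2 = TensorProduct.map (LinearMap.id : D1 →ₗ[K] D1) Φ2)
    (hΦT : ΦT = TensorProduct.map Φ1 Φ2)
    (hNT : NT = TensorProduct.map N1 (LinearMap.id : D2 →ₗ[K] D2)
        + TensorProduct.map (LinearMap.id : D1 →ₗ[K] D1) N2)
    (FilT : Submodule K (D1K ⊗[K] D2K))
    (hFilT : ∀ (v : Fil1) (v' : Fil2), (v : D1K) ⊗ₜ[K] (v' : D2K) ∈ FilT)
    -- the differentials of the three complexes involved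
    (d01 : (D1 × Fil1) →ₗ[K] (D1 × D1 × D1K))
    (hd01 : ∀ (u : D1) (v : Fil1),
      d01 (u, v) = (Polynomial.aeval Φ1 P1 u, N1 u, ι1 u - (v : D1K)))
    (d11 : (D1 × D1 × D1K) →ₗ[K] D1)
    (hd11 : ∀ (w x : D1) (y : D1K),
      d11 (w, x, y) = N1 w - Polynomial.aeval (q • Φ1) P1 x)
    (d02 : (D2 × Fil2) →ₗ[K] (D2 × D2 × D2K))
    (hd02 : ∀ (u : D2) (v : Fil2),
      d02 (u, v) = (Polynomial.aeval Φ2 P2 u, N2 u, ι2 u - (v : D2K)))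
    (d12 : (D2 × D2 × D2K) →ₗ[K] D2)
    (hd12 : ∀ (w x : D2) (y : D2K),
      d12 (w, x, y) = N2 w - Polynomial.aeval (q • Φ2) P2 x)
    (d0T : ((D1 ⊗[K] D2) × FilT) →ₗ[K]
      ((D1 ⊗[K] D2) × (D1 ⊗[K] D2) × (D1K ⊗[K] D2K)))
    (hd0T : ∀ (U : D1 ⊗[K] D2) (V : FilT),
      d0T (U, V) = (Polynomial.aeval ΦT R U, NT U,
        TensorProduct.congr ι1 ι2 U - (V : D1K ⊗[K] D2K)))
    (d1T : ((D1 ⊗[K] D2) × (D1 ⊗[K] D2) × (D1K ⊗[K] D2K)) →ₗ[K] (D1 ⊗[K] D2))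
    (hd1T : ∀ (W X : D1 ⊗[K] D2) (Y : D1K ⊗[K] D2K),
      d1T (W, X, Y) = NT W - Polynomial.aeval (q • ΦT) R X) :
    -- the chain homotopy
    ∃ (h01 : (D1 × Fil1) →ₗ[K] (D2 × D2 × D2K) →ₗ[K] ((D1 ⊗[K] D2) × FilT))
      (h10 : (D1 × D1 × D1K) →ₗ[K] (D2 × Fil2) →ₗ[K] ((D1 ⊗[K] D2) × FilT))
      (h02 : (D1 × Fil1) →ₗ[K] D2 →ₗ[K]
        ((D1 ⊗[K] D2) × (D1 ⊗[K] D2) × (D1K ⊗[K] D2K)))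
      (h11 : (D1 × D1 × D1K) →ₗ[K] (D2 × D2 × D2K) →ₗ[K]
        ((D1 ⊗[K] D2) × (D1 ⊗[K] D2) × (D1K ⊗[K] D2K)))
      (h20 : D1 →ₗ[K] (D2 × Fil2) →ₗ[K]
        ((D1 ⊗[K] D2) × (D1 ⊗[K] D2) × (D1K ⊗[K] D2K)))
      (h12 : (D1 × D1 × D1K) →ₗ[K] D2 →ₗ[K] (D1 ⊗[K] D2))
      (h21 : D1 →ₗ[K] (D2 × D2 × D2K) →ₗ[K] (D1 ⊗[K] D2)),
      -- total degree 0 (the (0,0)-products agree):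
      (∀ (u : D1) (v : Fil1) (u' : D2) (v' : Fil2),
        (0 : (D1 ⊗[K] D2) × FilT)
          = h10 (d01 (u, v)) (u', v') + h01 (u, v) (d02 (u', v'))) ∧
      -- total degree 1, bidegree (0,1):
      (∀ (u : D1) (v : Fil1) (w' x' : D2) (y' : D2K),
        ((0 : D1 ⊗[K] D2), (0 : D1 ⊗[K] D2),
            ((lam - lam') • (ι1 u - (v : D1K))) ⊗ₜ[K] y')
          = d0T (h01 (u, v) (w', x', y'))
            + h11 (d01 (u, v)) (w', x', y')
            + h02 (u, v) (d12 (w', x', y'))) ∧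
      -- total degree 1, bidegree (1,0):
      (∀ (w x : D1) (y : D1K) (u' : D2) (v' : Fil2),
        ((0 : D1 ⊗[K] D2), (0 : D1 ⊗[K] D2),
            y ⊗ₜ[K] ((lam - lam') • ((v' : D2K) - ι2 u')))
          = d0T (h10 (w, x, y) (u', v'))
            + h20 (d11 (w, x, y)) (u', v')
            - h11 (w, x, y) (d02 (u', v'))) ∧
      -- total degree 2, bidegree (1,1):
      (∀ (w x : D1) (y : D1K) (w' x' : D2) (y' : D2K),
        (0 : D1 ⊗[K] D2)
          = d1T (h11 (w, x, y) (w', x', y'))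
            + h21 (d11 (w, x, y)) (w', x', y')
            - h12 (w, x, y) (d12 (w', x', y'))) ∧
      -- total degree 2, bidegree (0,2):
      (∀ (u : D1) (v : Fil1) (z' : D2),
        (0 : D1 ⊗[K] D2) = d1T (h02 (u, v) z') + h12 (d01 (u, v)) z') ∧
      -- total degree 2, bidegree (2,0):
      (∀ (z : D1) (u' : D2) (v' : Fil2),
        (0 : D1 ⊗[K] D2) = d1T (h20 z (u', v')) + h21 z (d02 (u', v'))) := by

  classical
  -- only h11 is nonzero: h11 (w,x,y) (w',x',y') = (0, 0, (lam-lam') • y ⊗ y')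
  set proj1 : (D1 × D1 × D1K) →ₗ[K] D1K :=
    (LinearMap.snd K D1 D1K).comp (LinearMap.snd K D1 (D1 × D1K)) with hproj1
  set proj2 : (D2 × D2 × D2K) →ₗ[K] D2K :=
    (LinearMap.snd K D2 D2K).comp (LinearMap.snd K D2 (D2 × D2K)) with hproj2
  set post : (D1K ⊗[K] D2K) →ₗ[K]
      ((D1 ⊗[K] D2) × (D1 ⊗[K] D2) × (D1K ⊗[K] D2K)) :=
    (LinearMap.inr K (D1 ⊗[K] D2) ((D1 ⊗[K] D2) × (D1K ⊗[K] D2K))).comp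
      (LinearMap.inr K (D1 ⊗[K] D2) (D1K ⊗[K] D2K)) with hpost
  set h11 : (D1 × D1 × D1K) →ₗ[K] (D2 × D2 × D2K) →ₗ[K]
      ((D1 ⊗[K] D2) × (D1 ⊗[K] D2) × (D1K ⊗[K] D2K)) :=
    (lam - lam') •
      (((TensorProduct.mk K D1K D2K).compl₁₂ proj1 proj2).compr₂ post)
    with hh11
  have h11_apply : ∀ (p : D1 × D1 × D1K) (r : D2 × D2 × D2K),
      h11 p r = (0, 0, (lam - lam') • (p.2.2 ⊗ₜ[K] r.2.2)) := by
    intro p r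
    simp [hh11, hproj1, hproj2, hpost, Prod.smul_def]
  refine ⟨0, 0, 0, h11, 0, 0, 0, ?_, ?_, ?_, ?_, ?_, ?_⟩
  · intro u v u' v'; simp
  · intro u v w' x' y'
    rw [hd01, hd12, h11_apply]
    simp [hd0T, TensorProduct.smul_tmul', Prod.ext_iff]
  · intro w x y u' v'
    rw [hd02, h11_apply]
    simp [hd0T, Prod.ext_iff, TensorProduct.tmul_sub, smul_sub,
      TensorProduct.tmul_smul]
  · intro w x y w' x' y'
    rw [hd12, h11_apply]
    simp [hd1T]
  · intro u v z'
    rw [hd01]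
    simp [hd1T]
  · intro z u' v'
    rw [hd02]
    simp [hd1T]
end
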